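/- Let λ > 0 and let p ≥ 1 be an integer; for 1 ≤ j ≤ 2p set σ_j = 1 if j is even and σ_j = −1 if j is odd. Then there is a constant C > 0, depending only on p and λ, such that for all ε ∈ [0,1], all real N ≥ 1, all t ≥ 0 and all points x₁,…,x_{2p} ∈ ℝ², ∏_{1 ≤ j < k ≤ 2p} 𝒥_{ε,N}(t, x_j − x_k)^{σ_j σ_k λ} ≤ C · max_{τ ∈ S_p} ∏_{j=1}^{p} 𝒥_{ε,N}(t, x_{2j} − x_{2τ(j)−1})^{−λ}, where S_p is the set of permutations of {1,…,p}. -/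

import Mathlib

/-- The sine-Gordon two-point potential `𝒥_{ε,N}(t,·)` as a function of the distance `r`:
if `ε = 0` or `N ≤ (2ε)^{−1}` it is `(r+N^{−1})/(r+√t+N^{−1})`, otherwise it is
`((r+ε)/(r+√t+ε))·((r+N^{−1})/(r+ε))^{1−e^{−t/ε²}}`. -/
noncomputable def Jpot (ε N t r : ℝ) : ℝ :=
  if ε = 0 ∨ N ≤ 1 / (2 * ε) then (r + 1 / N) / (r + Real.sqrt t + 1 / N)
  else ((r + ε) / (r + Real.sqrt t + ε)) *
    ((r + 1 / N) / (r + ε)) ^ (1 - Real.exp (-t / ε ^ 2))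

/-- The alternating sign `σ_j` attached to the `j`-th point (`1`-based): `+1` if `j` is
even, `−1` if `j` is odd; here `i` is the `0`-based index. -/
def sgn {m : ℕ} (i : Fin m) : ℝ := if (i : ℕ) % 2 = 1 then 1 else -1

lemma frac_le (a s r r' : ℝ) (ha : 0 < a) (hs : 0 ≤ s) (hr : 0 ≤ r) (hr' : 0 ≤ r')
    (h : r ≤ 2 * r') : (r + a) / (r + s + a) ≤ 2 * ((r' + a) / (r' + s + a)) := by
  rw [div_le_iff₀ (by linarith), mul_comm (2:ℝ), mul_assoc, div_mul_eq_mul_div,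
    le_div_iff₀ (by linarith)]
  nlinarith [mul_nonneg (by linarith : (0:ℝ) ≤ 2*r' - r) hs, mul_nonneg hr hr',
    mul_nonneg ha.le hs, mul_nonneg ha.le ha.le]

lemma frac2_le (a b r r' : ℝ) (ha : 0 < a) (hb : 0 < b) (hab : a ≤ 2 * b)
    (hr : 0 ≤ r) (hr' : 0 ≤ r') (h : r ≤ 2 * r') :
    (r + a) / (r + b) ≤ 2 * ((r' + a) / (r' + b)) := by
  rw [div_le_iff₀ (by linarith), mul_comm (2:ℝ), mul_assoc, div_mul_eq_mul_div,
    le_div_iff₀ (by linarith)]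
  nlinarith [mul_nonneg (by linarith : (0:ℝ) ≤ 2*r' - r) hb.le,
    mul_nonneg (by linarith : (0:ℝ) ≤ 2*r' - r) ha.le,
    mul_nonneg (by linarith : (0:ℝ) ≤ 2*r' - r) hr',
    mul_nonneg (by linarith : (0:ℝ) ≤ 2*b - a) hr',
    mul_nonneg ha.le hb.le, mul_nonneg hr hr', mul_nonneg ha.le hr']

lemma jpot_pos {ε N t : ℝ} (hε : ε ∈ Set.Icc (0:ℝ) 1) (hN : 1 ≤ N) (ht : 0 ≤ t)
    {r : ℝ} (hr : 0 ≤ r) : 0 < Jpot ε N t r := by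
  have hN0 : (0:ℝ) < 1 / N := by positivity
  have hs : 0 ≤ Real.sqrt t := Real.sqrt_nonneg t
  unfold Jpot
  split_ifs with h
  · positivity
  · push_neg at h
    have hε0 : 0 < ε := lt_of_le_of_ne hε.1 (Ne.symm h.1)
    positivity

lemma jpot_comp {ε N t : ℝ} (hε : ε ∈ Set.Icc (0:ℝ) 1) (hN : 1 ≤ N) (ht : 0 ≤ t)
    {r r' : ℝ} (hr : 0 ≤ r) (hr' : 0 ≤ r') (h : r ≤ 2 * r') :
    Jpot ε N t r ≤ 4 * Jpot ε N t r' := by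
  have hN0 : (0:ℝ) < 1 / N := by positivity
  have hs : 0 ≤ Real.sqrt t := Real.sqrt_nonneg t
  unfold Jpot
  split_ifs with hc
  · have h2 := frac_le (1/N) (Real.sqrt t) r r' hN0 hs hr hr' h
    have hq : 0 ≤ (r' + 1/N) / (r' + Real.sqrt t + 1/N) := by positivity
    linarith
  · push_neg at hc
    have hε0 : 0 < ε := lt_of_le_of_ne hε.1 (Ne.symm hc.1)
    have hab : 1 / N ≤ 2 * ε := by
      rw [div_le_iff₀ (by linarith : (0:ℝ) < N)]
      rw [div_lt_iff₀ (by positivity : (0:ℝ) < 2 * ε)] at hc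
      nlinarith [hc.2]
    set θ := 1 - Real.exp (-t / ε ^ 2) with hθdef
    have hθ0 : 0 ≤ θ := by
      have h1 : Real.exp (-t / ε ^ 2) ≤ 1 := by
        rw [Real.exp_le_one_iff]
        apply div_nonpos_of_nonpos_of_nonneg (by linarith) (by positivity)
      simp only [hθdef]; linarith
    have hθ1 : θ ≤ 1 := by
      have h1 : 0 < Real.exp (-t / ε ^ 2) := Real.exp_pos _
      simp only [hθdef]; linarith
    have hB := frac_le ε (Real.sqrt t) r r' hε0 hs hr hr' h
    have hP := frac2_le (1/N) ε r r' hN0 hε0 hab hr hr' h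
    have hPr : 0 ≤ (r + 1/N) / (r + ε) := by positivity
    have hPr' : 0 < (r' + 1/N) / (r' + ε) := by positivity
    have hBr : 0 ≤ (r + ε) / (r + Real.sqrt t + ε) := by positivity
    have hBr' : 0 ≤ (r' + ε) / (r' + Real.sqrt t + ε) := by positivity
    have hpow : ((r + 1/N) / (r + ε)) ^ θ ≤ 2 * ((r' + 1/N) / (r' + ε)) ^ θ := by
      calc ((r + 1/N) / (r + ε)) ^ θ
          ≤ (2 * ((r' + 1/N) / (r' + ε))) ^ θ := Real.rpow_le_rpow hPr hP hθ0
        _ = (2:ℝ) ^ θ * ((r' + 1/N) / (r' + ε)) ^ θ := Real.mul_rpow (by norm_num) hPr'.le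
        _ ≤ 2 * ((r' + 1/N) / (r' + ε)) ^ θ := by
            have h2 : (2:ℝ) ^ θ ≤ (2:ℝ) ^ (1:ℝ) :=
              Real.rpow_le_rpow_of_exponent_le one_le_two hθ1
            rw [Real.rpow_one] at h2
            exact mul_le_mul_of_nonneg_right h2 (Real.rpow_nonneg hPr'.le θ)
    calc ((r + ε) / (r + Real.sqrt t + ε)) * ((r + 1/N) / (r + ε)) ^ θ
        ≤ (2 * ((r' + ε) / (r' + Real.sqrt t + ε))) * (2 * ((r' + 1/N) / (r' + ε)) ^ θ) := by
          apply mul_le_mul hB hpow (Real.rpow_nonneg hPr θ) (by linarith)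
      _ = 4 * (((r' + ε) / (r' + Real.sqrt t + ε)) * ((r' + 1/N) / (r' + ε)) ^ θ) := by ring


open Finset

lemma prod_pair_insert {p : ℕ} {a : Fin p} {S' : Finset (Fin p)} (ha : a ∉ S')
    (w : Fin p → Fin p → ℝ) (hw : ∀ i j, w i j = w j i) :
    (∏ i ∈ insert a S', ∏ j ∈ insert a S', (if i < j then w i j else 1)) =
      (∏ i ∈ S', w a i) * ∏ i ∈ S', ∏ j ∈ S', (if i < j then w i j else 1) := by
  rw [Finset.prod_insert ha]
  have h1 : (∏ j ∈ insert a S', (if a < j then w a j else 1))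
      = ∏ j ∈ S', (if a < j then w a j else 1) := by
    rw [Finset.prod_insert ha]; simp
  have h2 : ∀ i ∈ S', (∏ j ∈ insert a S', (if i < j then w i j else 1))
      = (if i < a then w i a else 1) * ∏ j ∈ S', (if i < j then w i j else 1) := by
    intro i _; rw [Finset.prod_insert ha]
  rw [h1, Finset.prod_congr rfl h2, Finset.prod_mul_distrib, ← mul_assoc,
    ← Finset.prod_mul_distrib]
  congr 1
  apply Finset.prod_congr rfl
  intro i hi
  have hne : a ≠ i := fun hcon => ha (hcon ▸ hi)
  rcases lt_trichotomy a i with hlt | heq | hgt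
  · simp [hlt, not_lt.mpr hlt.le]
  · exact absurd heq hne
  · simp [hgt, not_lt.mpr hgt.le, hw a i]

lemma prod_cross_insert {p : ℕ} {a b : Fin p} {S' T' : Finset (Fin p)}
    (ha : a ∉ S') (hb : b ∉ T') (c : Fin p → Fin p → ℝ) :
    (∏ i ∈ insert a S', ∏ j ∈ insert b T', c i j) =
      c a b * ((∏ j ∈ T', c a j) * ((∏ i ∈ S', c i b) * ∏ i ∈ S', ∏ j ∈ T', c i j)) := by
  rw [Finset.prod_insert ha]
  simp_rw [Finset.prod_insert hb]
  rw [Finset.prod_mul_distrib]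
  ring

lemma key_matching {J : ℝ → ℝ} {A lam : ℝ} (hA : 1 ≤ A) (hlam : 0 < lam)
    (hpos : ∀ r, 0 ≤ r → 0 < J r)
    (hcomp : ∀ r r', 0 ≤ r → 0 ≤ r' → r ≤ 2 * r' → J r ≤ A * J r')
    {p : ℕ} (u v : Fin p → EuclideanSpace ℝ (Fin 2)) :
    ∀ (n : ℕ) (S T : Finset (Fin p)), S.card = n → T.card = n →
    ∃ g : Fin p → Fin p, Set.BijOn g ↑S ↑T ∧
      (∏ i ∈ S, ∏ i' ∈ S, if i < i' then J ‖u i - u i'‖ ^ lam else 1) *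
      (∏ j ∈ T, ∏ j' ∈ T, if j < j' then J ‖v j - v j'‖ ^ lam else 1) *
      (∏ i ∈ S, ∏ j ∈ T, J ‖u i - v j‖ ^ (-lam)) ≤
      (((A ^ lam) ^ p) ^ 2) ^ n * ∏ i ∈ S, J ‖u i - v (g i)‖ ^ (-lam) := by
  have hAp : (0:ℝ) < A := lt_of_lt_of_le one_pos hA
  have hA1 : (1:ℝ) ≤ A ^ lam := by
    have h := Real.rpow_le_rpow_of_exponent_le hA hlam.le
    rwa [Real.rpow_zero] at h
  intro n
  induction n with
  | zero =>
    intro S T hS hT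
    have hSe : S = ∅ := Finset.card_eq_zero.mp hS
    have hTe : T = ∅ := Finset.card_eq_zero.mp hT
    subst hSe; subst hTe
    exact ⟨id, by simp, by simp⟩
  | succ n ih =>
    intro S T hS hT
    have hSne : S.Nonempty := Finset.card_pos.mp (by omega)
    have hTne : T.Nonempty := Finset.card_pos.mp (by omega)
    obtain ⟨z, hzmem, hmin⟩ := Finset.exists_min_image (S ×ˢ T)
      (fun q => ‖u q.1 - v q.2‖) (hSne.product hTne)
    obtain ⟨a, b⟩ := z
    rw [Finset.mem_product] at hzmem
    obtain ⟨haS, hbT⟩ := hzmem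
    set S' := S.erase a with hS'def
    set T' := T.erase b with hT'def
    have haS' : a ∉ S' := Finset.notMem_erase a S
    have hbT' : b ∉ T' := Finset.notMem_erase b T
    have hSins : S = insert a S' := (Finset.insert_erase haS).symm
    have hTins : T = insert b T' := (Finset.insert_erase hbT).symm
    have hS'c : S'.card = n := by
      rw [hS'def, Finset.card_erase_of_mem haS, hS]; omega
    have hT'c : T'.card = n := by
      rw [hT'def, Finset.card_erase_of_mem hbT, hT]; omega
    have hS'p : S'.card ≤ p := le_trans (Finset.card_le_univ S') (by simp)
    have hT'p : T'.card ≤ p := le_trans (Finset.card_le_univ T') (by simp)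
    obtain ⟨g', hgbij, hgle⟩ := ih S' T' hS'c hT'c
    have hneA : ∀ {i : Fin p}, i ∈ S' → i ≠ a := fun hi => Finset.ne_of_mem_erase hi
    refine ⟨Function.update g' a b, ?_, ?_⟩
    · -- bijectivity
      rw [hSins, hTins]
      refine ⟨?_, ?_, ?_⟩
      · intro i hi
        simp only [Finset.coe_insert, Set.mem_insert_iff, Finset.mem_coe] at hi ⊢
        rcases hi with rfl | hi
        · rw [Function.update_self]; exact Or.inl rfl
        · rw [Function.update_of_ne (hneA hi)]
          exact Or.inr (hgbij.1 hi)
      · intro i hi j hj hij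
        simp only [Finset.coe_insert, Set.mem_insert_iff, Finset.mem_coe] at hi hj
        rcases hi with rfl | hi <;> rcases hj with rfl | hj
        · rfl
        · exfalso
          rw [Function.update_self, Function.update_of_ne (hneA hj)] at hij
          exact hbT' (Finset.mem_coe.mp (by rw [hij]; exact hgbij.1 hj))
        · exfalso
          rw [Function.update_of_ne (hneA hi), Function.update_self] at hij
          exact hbT' (Finset.mem_coe.mp (by rw [← hij]; exact hgbij.1 hi))
        · rw [Function.update_of_ne (hneA hi), Function.update_of_ne (hneA hj)] at hij
          exact hgbij.2.1 hi hj hij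
      · intro t ht
        simp only [Finset.coe_insert, Set.mem_insert_iff, Finset.mem_coe] at ht
        rcases ht with rfl | ht
        · exact ⟨a, by simp, Function.update_self a t g'⟩
        · obtain ⟨i, hi, hgi⟩ := hgbij.2.2 ht
          have hi' : i ∈ S' := hi
          refine ⟨i, by simp [hi'], ?_⟩
          rw [Function.update_of_ne (Finset.ne_of_mem_erase hi')]
          exact hgi
    · -- the inequality
      have hwu : ∀ i j : Fin p, J ‖u i - u j‖ ^ lam = J ‖u j - u i‖ ^ lam := by
        intro i j; rw [norm_sub_rev]
      have hwv : ∀ i j : Fin p, J ‖v i - v j‖ ^ lam = J ‖v j - v i‖ ^ lam := by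
        intro i j; rw [norm_sub_rev]
      -- pointwise bounds
      have E1 : ∀ i ∈ S', J ‖u a - u i‖ ^ lam * J ‖u i - v b‖ ^ (-lam) ≤ A ^ lam := by
        intro i hi
        have hiS : i ∈ S := Finset.mem_of_mem_erase hi
        have h1 : ‖u a - v b‖ ≤ ‖u i - v b‖ :=
          hmin (i, b) (Finset.mem_product.mpr ⟨hiS, hbT⟩)
        have h2 : ‖u a - u i‖ ≤ 2 * ‖u i - v b‖ := by
          have t1 : ‖u a - u i‖ ≤ ‖u a - v b‖ + ‖v b - u i‖ := by
            simpa [dist_eq_norm] using dist_triangle (u a) (v b) (u i)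
          have t2 : ‖v b - u i‖ = ‖u i - v b‖ := norm_sub_rev _ _
          linarith
        have h3 : J ‖u a - u i‖ ≤ A * J ‖u i - v b‖ :=
          hcomp _ _ (norm_nonneg _) (norm_nonneg _) h2
        have hJpos := hpos _ (norm_nonneg (u i - v b))
        have h4 : J ‖u a - u i‖ ^ lam ≤ A ^ lam * J ‖u i - v b‖ ^ lam := by
          have := Real.rpow_le_rpow (le_of_lt (hpos _ (norm_nonneg _))) h3 hlam.le
          rwa [Real.mul_rpow hAp.le hJpos.le] at this
        have h5 : J ‖u i - v b‖ ^ lam * J ‖u i - v b‖ ^ (-lam) = 1 := by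
          rw [← Real.rpow_add hJpos]; norm_num
        calc J ‖u a - u i‖ ^ lam * J ‖u i - v b‖ ^ (-lam)
            ≤ (A ^ lam * J ‖u i - v b‖ ^ lam) * J ‖u i - v b‖ ^ (-lam) :=
              mul_le_mul_of_nonneg_right h4 (Real.rpow_nonneg hJpos.le _)
          _ = A ^ lam * (J ‖u i - v b‖ ^ lam * J ‖u i - v b‖ ^ (-lam)) := by ring
          _ = A ^ lam := by rw [h5, mul_one]
      have E2 : ∀ j ∈ T', J ‖v b - v j‖ ^ lam * J ‖u a - v j‖ ^ (-lam) ≤ A ^ lam := by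
        intro j hj
        have hjT : j ∈ T := Finset.mem_of_mem_erase hj
        have h1 : ‖u a - v b‖ ≤ ‖u a - v j‖ :=
          hmin (a, j) (Finset.mem_product.mpr ⟨haS, hjT⟩)
        have h2 : ‖v b - v j‖ ≤ 2 * ‖u a - v j‖ := by
          have t1 : ‖v b - v j‖ ≤ ‖v b - u a‖ + ‖u a - v j‖ := by
            simpa [dist_eq_norm] using dist_triangle (v b) (u a) (v j)
          have t2 : ‖v b - u a‖ = ‖u a - v b‖ := norm_sub_rev _ _
          linarith
        have h3 : J ‖v b - v j‖ ≤ A * J ‖u a - v j‖ :=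
          hcomp _ _ (norm_nonneg _) (norm_nonneg _) h2
        have hJpos := hpos _ (norm_nonneg (u a - v j))
        have h4 : J ‖v b - v j‖ ^ lam ≤ A ^ lam * J ‖u a - v j‖ ^ lam := by
          have := Real.rpow_le_rpow (le_of_lt (hpos _ (norm_nonneg _))) h3 hlam.le
          rwa [Real.mul_rpow hAp.le hJpos.le] at this
        have h5 : J ‖u a - v j‖ ^ lam * J ‖u a - v j‖ ^ (-lam) = 1 := by
          rw [← Real.rpow_add hJpos]; norm_num
        calc J ‖v b - v j‖ ^ lam * J ‖u a - v j‖ ^ (-lam)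
            ≤ (A ^ lam * J ‖u a - v j‖ ^ lam) * J ‖u a - v j‖ ^ (-lam) :=
              mul_le_mul_of_nonneg_right h4 (Real.rpow_nonneg hJpos.le _)
          _ = A ^ lam * (J ‖u a - v j‖ ^ lam * J ‖u a - v j‖ ^ (-lam)) := by ring
          _ = A ^ lam := by rw [h5, mul_one]
      -- nonnegativity facts
      have hterm_nonneg : ∀ (y z : EuclideanSpace ℝ (Fin 2)) (e : ℝ),
          0 ≤ J ‖y - z‖ ^ e :=
        fun y z e => Real.rpow_nonneg (hpos _ (norm_nonneg _)).le e
      have hQ1 : (∏ i ∈ S', J ‖u a - u i‖ ^ lam * J ‖u i - v b‖ ^ (-lam))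
          ≤ (A ^ lam) ^ p := by
        calc (∏ i ∈ S', J ‖u a - u i‖ ^ lam * J ‖u i - v b‖ ^ (-lam))
            ≤ ∏ _i ∈ S', A ^ lam := by
              apply Finset.prod_le_prod
                (fun i _ => mul_nonneg (hterm_nonneg _ _ _) (hterm_nonneg _ _ _)) E1
          _ = (A ^ lam) ^ S'.card := Finset.prod_const _
          _ ≤ (A ^ lam) ^ p := pow_le_pow_right₀ hA1 hS'p
      have hQ2 : (∏ j ∈ T', J ‖v b - v j‖ ^ lam * J ‖u a - v j‖ ^ (-lam))
          ≤ (A ^ lam) ^ p := by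
        calc (∏ j ∈ T', J ‖v b - v j‖ ^ lam * J ‖u a - v j‖ ^ (-lam))
            ≤ ∏ _j ∈ T', A ^ lam := by
              apply Finset.prod_le_prod
                (fun j _ => mul_nonneg (hterm_nonneg _ _ _) (hterm_nonneg _ _ _)) E2
          _ = (A ^ lam) ^ T'.card := Finset.prod_const _
          _ ≤ (A ^ lam) ^ p := pow_le_pow_right₀ hA1 hT'p
      -- restructure the main product
      have hupd : (∏ i ∈ S, J ‖u i - v (Function.update g' a b i)‖ ^ (-lam)) =
          J ‖u a - v b‖ ^ (-lam) * ∏ i ∈ S', J ‖u i - v (g' i)‖ ^ (-lam) := by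
        rw [hSins, Finset.prod_insert haS', Function.update_self]
        congr 1
        apply Finset.prod_congr rfl
        intro i hi
        rw [Function.update_of_ne (Finset.ne_of_mem_erase hi)]
      rw [hupd]
      have hmain : (∏ i ∈ S, ∏ i' ∈ S, if i < i' then J ‖u i - u i'‖ ^ lam else 1) *
          (∏ j ∈ T, ∏ j' ∈ T, if j < j' then J ‖v j - v j'‖ ^ lam else 1) *
          (∏ i ∈ S, ∏ j ∈ T, J ‖u i - v j‖ ^ (-lam)) =
          J ‖u a - v b‖ ^ (-lam) *
          ((∏ i ∈ S', J ‖u a - u i‖ ^ lam * J ‖u i - v b‖ ^ (-lam)) *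
          ((∏ j ∈ T', J ‖v b - v j‖ ^ lam * J ‖u a - v j‖ ^ (-lam)) *
          ((∏ i ∈ S', ∏ i' ∈ S', if i < i' then J ‖u i - u i'‖ ^ lam else 1) *
          (∏ j ∈ T', ∏ j' ∈ T', if j < j' then J ‖v j - v j'‖ ^ lam else 1) *
          (∏ i ∈ S', ∏ j ∈ T', J ‖u i - v j‖ ^ (-lam))))) := by
        rw [hSins, hTins,
          prod_pair_insert haS' (fun i j => J ‖u i - u j‖ ^ lam) (fun i j => hwu i j),
          prod_pair_insert hbT' (fun i j => J ‖v i - v j‖ ^ lam) (fun i j => hwv i j),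
          prod_cross_insert haS' hbT' (fun i j => J ‖u i - v j‖ ^ (-lam)),
          Finset.prod_mul_distrib, Finset.prod_mul_distrib]
        ring
      rw [hmain]
      -- now chain the bounds
      have hL'nn : 0 ≤ (∏ i ∈ S', ∏ i' ∈ S', if i < i' then J ‖u i - u i'‖ ^ lam else 1) *
          (∏ j ∈ T', ∏ j' ∈ T', if j < j' then J ‖v j - v j'‖ ^ lam else 1) *
          (∏ i ∈ S', ∏ j ∈ T', J ‖u i - v j‖ ^ (-lam)) := by
        apply mul_nonneg (mul_nonneg ?_ ?_) ?_ <;>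
        · apply Finset.prod_nonneg
          intro i _
          apply Finset.prod_nonneg
          intro j _
          first
          | exact hterm_nonneg _ _ _
          | · split_ifs
              · exact hterm_nonneg _ _ _
              · norm_num
      have hQ1nn : 0 ≤ ∏ i ∈ S', J ‖u a - u i‖ ^ lam * J ‖u i - v b‖ ^ (-lam) :=
        Finset.prod_nonneg fun i _ => mul_nonneg (hterm_nonneg _ _ _) (hterm_nonneg _ _ _)
      have hQ2nn : 0 ≤ ∏ j ∈ T', J ‖v b - v j‖ ^ lam * J ‖u a - v j‖ ^ (-lam) :=
        Finset.prod_nonneg fun j _ => mul_nonneg (hterm_nonneg _ _ _) (hterm_nonneg _ _ _)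
      have hM'nn : 0 ≤ ∏ i ∈ S', J ‖u i - v (g' i)‖ ^ (-lam) :=
        Finset.prod_nonneg fun i _ => hterm_nonneg _ _ _
      have hApnn : (0:ℝ) ≤ (A ^ lam) ^ p := pow_nonneg (Real.rpow_nonneg hAp.le _) _
      have hKnn : (0:ℝ) ≤ (((A ^ lam) ^ p) ^ 2) ^ n :=
        pow_nonneg (pow_nonneg hApnn 2) n
      have step : (∏ i ∈ S', J ‖u a - u i‖ ^ lam * J ‖u i - v b‖ ^ (-lam)) *
          ((∏ j ∈ T', J ‖v b - v j‖ ^ lam * J ‖u a - v j‖ ^ (-lam)) *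
          ((∏ i ∈ S', ∏ i' ∈ S', if i < i' then J ‖u i - u i'‖ ^ lam else 1) *
          (∏ j ∈ T', ∏ j' ∈ T', if j < j' then J ‖v j - v j'‖ ^ lam else 1) *
          (∏ i ∈ S', ∏ j ∈ T', J ‖u i - v j‖ ^ (-lam)))) ≤
          (A ^ lam) ^ p * ((A ^ lam) ^ p *
            ((((A ^ lam) ^ p) ^ 2) ^ n * ∏ i ∈ S', J ‖u i - v (g' i)‖ ^ (-lam))) := by
        apply mul_le_mul hQ1 ?_ (mul_nonneg hQ2nn hL'nn) hApnn
        apply mul_le_mul hQ2 hgle hL'nn hApnn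
      calc J ‖u a - v b‖ ^ (-lam) *
          ((∏ i ∈ S', J ‖u a - u i‖ ^ lam * J ‖u i - v b‖ ^ (-lam)) *
          ((∏ j ∈ T', J ‖v b - v j‖ ^ lam * J ‖u a - v j‖ ^ (-lam)) *
          ((∏ i ∈ S', ∏ i' ∈ S', if i < i' then J ‖u i - u i'‖ ^ lam else 1) *
          (∏ j ∈ T', ∏ j' ∈ T', if j < j' then J ‖v j - v j'‖ ^ lam else 1) *
          (∏ i ∈ S', ∏ j ∈ T', J ‖u i - v j‖ ^ (-lam)))))
          ≤ J ‖u a - v b‖ ^ (-lam) * ((A ^ lam) ^ p * ((A ^ lam) ^ p *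
            ((((A ^ lam) ^ p) ^ 2) ^ n * ∏ i ∈ S', J ‖u i - v (g' i)‖ ^ (-lam)))) :=
            mul_le_mul_of_nonneg_left step (hterm_nonneg _ _ _)
        _ = (((A ^ lam) ^ p) ^ 2) ^ (n + 1) *
            (J ‖u a - v b‖ ^ (-lam) * ∏ i ∈ S', J ‖u i - v (g' i)‖ ^ (-lam)) := by
            rw [pow_succ]; ring

def pairEquiv (p : ℕ) : Fin p × Fin 2 ≃ Fin (2 * p) where
  toFun y := ⟨2 * y.1 + y.2, by have := y.1.isLt; have := y.2.isLt; omega⟩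
  invFun j := (⟨(j : ℕ) / 2, by have := j.isLt; omega⟩, ⟨(j : ℕ) % 2, by omega⟩)
  left_inv := by
    rintro ⟨⟨q, hq⟩, ⟨r, hr⟩⟩
    simp [Prod.ext_iff, Fin.ext_iff]
    omega
  right_inv := by
    rintro ⟨j, hj⟩
    simp [Fin.ext_iff]
    omega

lemma pe_val {p : ℕ} (q : Fin p) (r : Fin 2) :
    (pairEquiv p (q, r) : ℕ) = 2 * (q : ℕ) + (r : ℕ) := rfl

lemma sgn_pe0 {p : ℕ} (q : Fin p) : sgn (pairEquiv p (q, 0)) = -1 := by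
  have h : ((pairEquiv p (q, 0)) : ℕ) % 2 = 0 := by rw [pe_val]; omega
  simp [sgn, h]

lemma sgn_pe1 {p : ℕ} (q : Fin p) : sgn (pairEquiv p (q, 1)) = 1 := by
  have h : ((pairEquiv p (q, 1)) : ℕ) % 2 = 1 := by rw [pe_val]; simp
  simp [sgn, h]

lemma pe_lt00 {p : ℕ} (q q' : Fin p) :
    pairEquiv p (q, 0) < pairEquiv p (q', 0) ↔ q < q' := by
  rw [Fin.lt_def, pe_val, pe_val, Fin.lt_def]; simp only [Fin.val_zero, Fin.val_one]; omega

lemma pe_lt11 {p : ℕ} (q q' : Fin p) :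
    pairEquiv p (q, 1) < pairEquiv p (q', 1) ↔ q < q' := by
  rw [Fin.lt_def, pe_val, pe_val, Fin.lt_def]; simp only [Fin.val_zero, Fin.val_one]; omega

lemma pe_lt01 {p : ℕ} (q q' : Fin p) :
    pairEquiv p (q, 0) < pairEquiv p (q', 1) ↔ q ≤ q' := by
  rw [Fin.lt_def, pe_val, pe_val, Fin.le_def]; simp only [Fin.val_zero, Fin.val_one]; omega

lemma pe_lt10 {p : ℕ} (q q' : Fin p) :
    pairEquiv p (q, 1) < pairEquiv p (q', 0) ↔ q < q' := by
  rw [Fin.lt_def, pe_val, pe_val, Fin.lt_def]; simp only [Fin.val_zero, Fin.val_one]; omega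

lemma mixed_merge {p : ℕ} (c : Fin p → Fin p → ℝ) :
    (∏ q : Fin p, ∏ q' : Fin p, if q ≤ q' then c q q' else 1) *
      (∏ q : Fin p, ∏ q' : Fin p, if q < q' then c q' q else 1) =
      ∏ q : Fin p, ∏ q' : Fin p, c q q' := by
  have h : (∏ q : Fin p, ∏ q' : Fin p, if q < q' then c q' q else 1) =
      ∏ a : Fin p, ∏ b : Fin p, if b < a then c a b else 1 :=
    Finset.prod_comm
  rw [h, ← Finset.prod_mul_distrib]
  apply Finset.prod_congr rfl
  intro a _
  rw [← Finset.prod_mul_distrib]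
  apply Finset.prod_congr rfl
  intro b _
  rcases le_or_gt a b with hab | hab
  · simp [hab, not_lt.mpr hab]
  · simp [hab, not_le.mpr hab]

lemma conv {p : ℕ} (J : ℝ → ℝ) (lam : ℝ) (x : Fin (2 * p) → EuclideanSpace ℝ (Fin 2)) :
    (∏ j : Fin (2 * p), ∏ k : Fin (2 * p),
        if j < k then J ‖x j - x k‖ ^ (sgn j * sgn k * lam) else 1) =
      (∏ q : Fin p, ∏ q' : Fin p,
        if q < q' then J ‖x (pairEquiv p (q, 1)) - x (pairEquiv p (q', 1))‖ ^ lam else 1) *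
      (∏ q : Fin p, ∏ q' : Fin p,
        if q < q' then J ‖x (pairEquiv p (q, 0)) - x (pairEquiv p (q', 0))‖ ^ lam else 1) *
      (∏ q : Fin p, ∏ q' : Fin p,
        J ‖x (pairEquiv p (q, 1)) - x (pairEquiv p (q', 0))‖ ^ (-lam)) := by
  have h1 : (∏ j : Fin (2 * p), ∏ k : Fin (2 * p),
        if j < k then J ‖x j - x k‖ ^ (sgn j * sgn k * lam) else 1) =
      ∏ y : Fin p × Fin 2, ∏ z : Fin p × Fin 2,
        if pairEquiv p y < pairEquiv p z then
          J ‖x (pairEquiv p y) - x (pairEquiv p z)‖ ^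
            (sgn (pairEquiv p y) * sgn (pairEquiv p z) * lam) else 1 := by
    rw [← Equiv.prod_comp (pairEquiv p) (fun j => ∏ k : Fin (2 * p),
      if j < k then J ‖x j - x k‖ ^ (sgn j * sgn k * lam) else 1)]
    apply Finset.prod_congr rfl
    intro y _
    rw [← Equiv.prod_comp (pairEquiv p) (fun k =>
      if pairEquiv p y < k then
        J ‖x (pairEquiv p y) - x k‖ ^ (sgn (pairEquiv p y) * sgn k * lam) else 1)]
  rw [h1, Fintype.prod_prod_type]
  have h2 : ∀ q : Fin p, ∀ r : Fin 2,
      (∏ z : Fin p × Fin 2,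
        if pairEquiv p (q, r) < pairEquiv p z then
          J ‖x (pairEquiv p (q, r)) - x (pairEquiv p z)‖ ^
            (sgn (pairEquiv p (q, r)) * sgn (pairEquiv p z) * lam) else 1) =
      ∏ q' : Fin p, ∏ r' : Fin 2,
        if pairEquiv p (q, r) < pairEquiv p (q', r') then
          J ‖x (pairEquiv p (q, r)) - x (pairEquiv p (q', r'))‖ ^
            (sgn (pairEquiv p (q, r)) * sgn (pairEquiv p (q', r')) * lam) else 1 := by
    intro q r
    exact Fintype.prod_prod_type _
  simp only [h2]
  have h3 : ∀ q : Fin p,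
      (∏ r : Fin 2, ∏ q' : Fin p, ∏ r' : Fin 2,
        if pairEquiv p (q, r) < pairEquiv p (q', r') then
          J ‖x (pairEquiv p (q, r)) - x (pairEquiv p (q', r'))‖ ^
            (sgn (pairEquiv p (q, r)) * sgn (pairEquiv p (q', r')) * lam) else 1) =
      ∏ q' : Fin p, ∏ r : Fin 2, ∏ r' : Fin 2,
        if pairEquiv p (q, r) < pairEquiv p (q', r') then
          J ‖x (pairEquiv p (q, r)) - x (pairEquiv p (q', r'))‖ ^
            (sgn (pairEquiv p (q, r)) * sgn (pairEquiv p (q', r')) * lam) else 1 := by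
    intro q
    exact Finset.prod_comm
  simp only [h3]
  simp only [Fin.prod_univ_two, sgn_pe0, sgn_pe1, pe_lt00, pe_lt01, pe_lt10, pe_lt11,
    neg_mul_neg, one_mul, neg_one_mul, mul_one, neg_mul, neg_neg]
  simp only [Finset.prod_mul_distrib]
  -- now pure rearrangement plus mixed_merge
  have hmm := mixed_merge (fun q q' : Fin p =>
    J ‖x (pairEquiv p (q, 0)) - x (pairEquiv p (q', 1))‖ ^ (-lam))
  have hsym : (∏ q : Fin p, ∏ q' : Fin p,
      if q < q' then J ‖x (pairEquiv p (q, 1)) - x (pairEquiv p (q', 0))‖ ^ (-lam) else 1) =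
      ∏ q : Fin p, ∏ q' : Fin p,
      if q < q' then J ‖x (pairEquiv p (q', 0)) - x (pairEquiv p (q, 1))‖ ^ (-lam) else 1 := by
    apply Finset.prod_congr rfl; intro q _
    apply Finset.prod_congr rfl; intro q' _
    rw [norm_sub_rev]
  have hcr : (∏ q : Fin p, ∏ q' : Fin p,
      J ‖x (pairEquiv p (q, 0)) - x (pairEquiv p (q', 1))‖ ^ (-lam)) =
      ∏ q : Fin p, ∏ q' : Fin p,
      J ‖x (pairEquiv p (q, 1)) - x (pairEquiv p (q', 0))‖ ^ (-lam) := by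
    rw [Finset.prod_comm]
    apply Finset.prod_congr rfl; intro q _
    apply Finset.prod_congr rfl; intro q' _
    rw [norm_sub_rev]
  rw [hsym] at *
  rw [← hcr, ← hmm]
  ring

/-- Cancellation of charge: for `λ > 0` and `p ≥ 1` there is `C > 0` such that for all
`ε ∈ [0,1]`, `N ≥ 1`, `t ≥ 0` and points `x₁,…,x_{2p} ∈ ℝ²`,
`∏_{j<k} 𝒥_{ε,N}(t,x_j−x_k)^{σ_jσ_kλ} ≤ C·max_{τ∈S_p} ∏_j 𝒥_{ε,N}(t,x_{2j}−x_{2τ(j)−1})^{−λ}`. -/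
theorem cancellation_of_charge (lam : ℝ) (hlam : 0 < lam) (p : ℕ) (hp : 1 ≤ p) :
    ∃ C : ℝ, 0 < C ∧
      ∀ (ε N t : ℝ) (x : Fin (2 * p) → EuclideanSpace ℝ (Fin 2)),
        ε ∈ Set.Icc (0:ℝ) 1 → 1 ≤ N → 0 ≤ t →
        (∏ j : Fin (2 * p), ∏ k : Fin (2 * p),
          if j < k then Jpot ε N t ‖x j - x k‖ ^ (sgn j * sgn k * lam) else 1)
          ≤ C * ⨆ τ : Equiv.Perm (Fin p),
              ∏ j : Fin p,
                Jpot ε N t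
                    ‖x ⟨2 * (j : ℕ) + 1, by have := j.isLt; omega⟩ -
                      x ⟨2 * ((τ j : Fin p) : ℕ), by have := (τ j).isLt; omega⟩‖
                  ^ (-lam) := by
  refine ⟨(((((4:ℝ) ^ lam) ^ p) ^ 2) ^ p), by positivity, ?_⟩
  intro ε N t x hε hN ht
  have hpos : ∀ r : ℝ, 0 ≤ r → 0 < Jpot ε N t r := fun r hr => jpot_pos hε hN ht hr
  have hcomp : ∀ r r' : ℝ, 0 ≤ r → 0 ≤ r' → r ≤ 2 * r' →
      Jpot ε N t r ≤ 4 * Jpot ε N t r' := fun r r' hr hr' h =>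
    jpot_comp hε hN ht hr hr' h
  obtain ⟨g, hbij, hle⟩ := key_matching (J := Jpot ε N t) (A := 4)
    (by norm_num) hlam hpos hcomp
    (fun q => x (pairEquiv p (q, 1))) (fun q => x (pairEquiv p (q, 0)))
    p Finset.univ Finset.univ (by simp) (by simp)
  have hgbij : Function.Bijective g := by
    rw [← Set.bijOn_univ]
    simpa using hbij
  set τ0 : Equiv.Perm (Fin p) := Equiv.ofBijective g hgbij with hτ0
  have hKnn : (0:ℝ) ≤ ((((4:ℝ) ^ lam) ^ p) ^ 2) ^ p := by positivity
  have hMeq : (∏ i : Fin p,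
      Jpot ε N t ‖x (pairEquiv p (i, 1)) - x (pairEquiv p (g i, 0))‖ ^ (-lam)) =
      ∏ j : Fin p,
        Jpot ε N t
            ‖x ⟨2 * (j : ℕ) + 1, by have := j.isLt; omega⟩ -
              x ⟨2 * ((τ0 j : Fin p) : ℕ), by have := (τ0 j).isLt; omega⟩‖
          ^ (-lam) := by
    apply Finset.prod_congr rfl
    intro i _
    have h1 : x (pairEquiv p (i, 1)) =
        x ⟨2 * (i : ℕ) + 1, by have := i.isLt; omega⟩ := by
      rfl
    have h2 : x (pairEquiv p (g i, 0)) =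
        x ⟨2 * ((τ0 i : Fin p) : ℕ), by have := (τ0 i).isLt; omega⟩ := by
      rfl
    rw [h1, h2]
  have hsup : (∏ j : Fin p,
        Jpot ε N t
            ‖x ⟨2 * (j : ℕ) + 1, by have := j.isLt; omega⟩ -
              x ⟨2 * ((τ0 j : Fin p) : ℕ), by have := (τ0 j).isLt; omega⟩‖
          ^ (-lam)) ≤
      ⨆ τ : Equiv.Perm (Fin p), ∏ j : Fin p,
        Jpot ε N t
            ‖x ⟨2 * (j : ℕ) + 1, by have := j.isLt; omega⟩ -
              x ⟨2 * ((τ j : Fin p) : ℕ), by have := (τ j).isLt; omega⟩‖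
          ^ (-lam) := by
    exact le_ciSup (f := fun τ : Equiv.Perm (Fin p) => ∏ j : Fin p,
      Jpot ε N t
          ‖x ⟨2 * (j : ℕ) + 1, by have := j.isLt; omega⟩ -
            x ⟨2 * ((τ j : Fin p) : ℕ), by have := (τ j).isLt; omega⟩‖
        ^ (-lam)) ((Set.finite_range _).bddAbove) τ0
  rw [conv (Jpot ε N t) lam x]
  calc (∏ q : Fin p, ∏ q' : Fin p,
        if q < q' then Jpot ε N t
          ‖x (pairEquiv p (q, 1)) - x (pairEquiv p (q', 1))‖ ^ lam else 1) *
      (∏ q : Fin p, ∏ q' : Fin p,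
        if q < q' then Jpot ε N t
          ‖x (pairEquiv p (q, 0)) - x (pairEquiv p (q', 0))‖ ^ lam else 1) *
      (∏ q : Fin p, ∏ q' : Fin p,
        Jpot ε N t ‖x (pairEquiv p (q, 1)) - x (pairEquiv p (q', 0))‖ ^ (-lam))
      ≤ ((((4:ℝ) ^ lam) ^ p) ^ 2) ^ p * ∏ i : Fin p,
          Jpot ε N t ‖x (pairEquiv p (i, 1)) - x (pairEquiv p (g i, 0))‖ ^ (-lam) := hle
    _ ≤ ((((4:ℝ) ^ lam) ^ p) ^ 2) ^ p * ⨆ τ : Equiv.Perm (Fin p), ∏ j : Fin p,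
        Jpot ε N t
            ‖x ⟨2 * (j : ℕ) + 1, by have := j.isLt; omega⟩ -
              x ⟨2 * ((τ j : Fin p) : ℕ), by have := (τ j).isLt; omega⟩‖
          ^ (-lam) := by
        apply mul_le_mul_of_nonneg_left _ hKnn
        rw [hMeq]
        exact hsup
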